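/- Let k ≥ 2, H₁,…,H_k ∈ [1/2,1) with ∑ᵢ Hᵢ > k−2 (vacuous for k ≤ 3), D ⊆ [−R,R]^k bounded, and λ ∈ (0, (2−k+∑ᵢHᵢ) ∧ 1). Then there is a constant C such that for all x, z ∈ D: ‖ |x−·|^{2−k−λ} ‖_{L^{1/H₁,…,1/H_k}(D)} ≤ C, and consequently ‖G(x,·) − G(z,·)‖_{L^{1/H₁,…,1/H_k}(D)} ≤ C|x−z|^λ where G(x,y)=|x−y|^{2−k}. -/

import Mathlib

open MeasureTheory
open scoped BigOperators

/-- The mixed `L^{p₁,…,p_k}` norm, defined recursively: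
`‖h‖ = (∫_{S k} ‖h(·,t)‖_{p₁,…,p_{k-1}}^{p_k} dt)^{1/p_k}`. -/
noncomputable def mixedNorm : (k : ℕ) → (Fin k → ℝ) → (Fin k → Set ℝ) →
    ((Fin k → ℝ) → ℝ) → ℝ
  | 0, _, _, h => |h (fun i => i.elim0)|
  | k + 1, p, S, h =>
      (∫ t in S (Fin.last k),
          (mixedNorm k (fun i => p i.castSucc) (fun i => S i.castSucc)
            (fun η => h (Fin.snoc η t))) ^ p (Fin.last k)) ^ (1 / p (Fin.last k))

/-- The Euclidean norm on `ℝᵏ`. -/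
noncomputable def eucNorm {k : ℕ} (x : Fin k → ℝ) : ℝ := Real.sqrt (∑ i, x i ^ 2)

lemma rpow_add_le_add_rpow_real {x y p : ℝ} (hx : 0 ≤ x) (hy : 0 ≤ y) (hp : 0 ≤ p)
    (hp1 : p ≤ 1) : (x + y) ^ p ≤ x ^ p + y ^ p := by
  have h := NNReal.rpow_add_le_add_rpow x.toNNReal y.toNNReal hp hp1
  have := NNReal.coe_le_coe.2 h
  push_cast [NNReal.coe_rpow] at this
  rwa [Real.coe_toNNReal x hx, Real.coe_toNNReal y hy] at this

lemma aux_oneDim {R : ℝ} (hR : 0 < R) {e : ℝ} (he0 : 0 ≤ e) (he1 : e < 1) {a : ℝ}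
    (ha : |a| ≤ R) :
    IntegrableOn (fun t => |a - t| ^ (-e)) (Set.Icc (-R) R) ∧
    ∫ t in Set.Icc (-R) R, |a - t| ^ (-e) ≤ 2 * (2*R) ^ (1-e) / (1-e) := by
  rw [abs_le] at ha
  have hfe : (fun t : ℝ => |a - t| ^ (-e)) = fun t => |t - a| ^ (-e) := by
    funext t; rw [abs_sub_comm]
  have hb : -1 < -e := by linarith
  have hIright : IntervalIntegrable (fun x : ℝ => x ^ (-e)) volume 0 (2*R) :=
    intervalIntegral.intervalIntegrable_rpow' hb
  have hle1 : a ≤ 2*R + a := by linarith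
  have hle2 : a - 2*R ≤ a := by linarith
  have hle3 : a - 2*R ≤ 2*R + a := by linarith
  -- interval integrability of |t-a|^(-e) on right piece
  have hrineq : IntervalIntegrable (fun t : ℝ => |t - a| ^ (-e)) volume a (2*R + a) := by
    have hright : IntervalIntegrable (fun t : ℝ => (t - a) ^ (-e)) volume a (2*R + a) := by
      simpa using hIright.comp_sub_right a
    apply hright.congr
    rw [Set.uIoc_of_le hle1]
    intro t ht
    show (t - a) ^ (-e) = |t - a| ^ (-e)
    rw [abs_of_nonneg (by linarith [ht.1] : (0:ℝ) ≤ t - a)]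
  have hlineq : IntervalIntegrable (fun t : ℝ => |t - a| ^ (-e)) volume (a - 2*R) a := by
    have hleft : IntervalIntegrable (fun t : ℝ => (a - t) ^ (-e)) volume (a - 2*R) a := by
      simpa using (hIright.comp_sub_left a).symm
    apply hleft.congr
    rw [Set.uIoc_of_le hle2]
    intro t ht
    show (a - t) ^ (-e) = |t - a| ^ (-e)
    rw [abs_sub_comm, abs_of_nonneg (by linarith [ht.2] : (0:ℝ) ≤ a - t)]
  have hbig : IntervalIntegrable (fun t : ℝ => |t - a| ^ (-e)) volume (a - 2*R) (2*R + a) :=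
    hlineq.trans hrineq
  have hbigOn : IntegrableOn (fun t : ℝ => |t - a| ^ (-e)) (Set.Ioc (a - 2*R) (2*R + a)) :=
    (intervalIntegrable_iff_integrableOn_Ioc_of_le hle3).1 hbig
  have hsub : Set.Icc (-R) R ≤ᵐ[volume] Set.Ioc (a - 2*R) (2*R + a) := by
    rw [MeasureTheory.ae_le_set]
    refine measure_mono_null ?_ (measure_singleton (a - 2*R))
    intro t ht
    · simp only [Set.mem_diff, Set.mem_Icc, Set.mem_Ioc, not_and, not_le] at ht
      have h1 : t ≤ a - 2*R ∨ 2*R + a < t := by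
        by_contra hcon
        push_neg at hcon
        exact absurd (ht.2 (by linarith [hcon.1]) ) (by push_neg; exact hcon.2)
      simp only [Set.mem_singleton_iff]
      rcases h1 with h | h
      · linarith [ht.1.1, ha.2]
      · linarith [ht.1.2, ha.1]
  have hnn : 0 ≤ᵐ[volume.restrict (Set.Ioc (a - 2*R) (2*R + a))]
      (fun t : ℝ => |t - a| ^ (-e)) :=
    Filter.Eventually.of_forall fun t => Real.rpow_nonneg (abs_nonneg _) _
  constructor
  · rw [hfe]
    exact (hbigOn.mono_set_ae hsub)
  · rw [hfe]
    calc ∫ t in Set.Icc (-R) R, |t - a| ^ (-e)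
        ≤ ∫ t in Set.Ioc (a - 2*R) (2*R + a), |t - a| ^ (-e) :=
          setIntegral_mono_set hbigOn hnn hsub
      _ = ∫ t in (a-2*R)..(2*R + a), |t - a| ^ (-e) :=
          (intervalIntegral.integral_of_le hle3).symm
      _ = (∫ t in (a-2*R)..a, |t - a| ^ (-e)) + ∫ t in a..(2*R + a), |t - a| ^ (-e) :=
          (intervalIntegral.integral_add_adjacent_intervals hlineq hrineq).symm
      _ ≤ 2 * (2*R) ^ (1-e) / (1-e) := by
          have hval : ∫ x in (0:ℝ)..(2*R), x ^ (-e) = (2*R) ^ (1-e) / (1-e) := by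
            rw [integral_rpow (Or.inl hb)]
            rw [Real.zero_rpow (by linarith : -e + 1 ≠ 0)]
            norm_num
            rw [show -e + 1 = 1 - e by ring]
          have hL : ∫ t in (a-2*R)..a, |t - a| ^ (-e) = (2*R) ^ (1-e) / (1-e) := by
            rw [intervalIntegral.integral_congr (g := fun t => (a - t) ^ (-e))
              (by intro t ht
                  rw [Set.uIcc_of_le hle2, Set.mem_Icc] at ht
                  simp only
                  rw [abs_sub_comm, abs_of_nonneg (by linarith [ht.2] : (0:ℝ) ≤ a - t)])]
            rw [intervalIntegral.integral_comp_sub_left (fun x => x ^ (-e)) a]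
            simpa using hval
          have hRt : ∫ t in a..(2*R + a), |t - a| ^ (-e) = (2*R) ^ (1-e) / (1-e) := by
            rw [intervalIntegral.integral_congr (g := fun t => (t - a) ^ (-e))
              (by intro t ht
                  rw [Set.uIcc_of_le hle1, Set.mem_Icc] at ht
                  simp only
                  rw [abs_of_nonneg (by linarith [ht.1] : (0:ℝ) ≤ t - a)])]
            rw [intervalIntegral.integral_comp_sub_right (fun x => x ^ (-e)) a]
            simpa using hval
          rw [hL, hRt]
          ring_nf
          exact le_refl _

lemma mixedNorm_nonneg : ∀ (k : ℕ) (p : Fin k → ℝ) (S : Fin k → Set ℝ)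
    (h : (Fin k → ℝ) → ℝ), 0 ≤ mixedNorm k p S h
  | 0, _, _, h => abs_nonneg _
  | k + 1, p, S, h => Real.rpow_nonneg
      (integral_nonneg fun t => Real.rpow_nonneg
        (mixedNorm_nonneg k _ _ _) _) _

lemma mixedNorm_le (k : ℕ) (p : Fin k → ℝ) (hp : ∀ i, 1 ≤ p i)
    (R : ℝ) (g g' : Fin k → ℝ → ℝ) (ex ex' : Fin k → ℝ)
    (hg0 : ∀ i t, 0 ≤ g i t) (hg'0 : ∀ i t, 0 ≤ g' i t)
    (hgint : ∀ i, IntegrableOn (fun t => g i t ^ p i) (Set.Icc (-R) R))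
    (hg'int : ∀ i, IntegrableOn (fun t => g' i t ^ p i) (Set.Icc (-R) R))
    (c : ℝ) (hc : 0 ≤ c) (h : (Fin k → ℝ) → ℝ)
    (hbound : ∀ y : Fin k → ℝ, (∀ i, y i ≠ ex i) → (∀ i, y i ≠ ex' i) →
      |h y| ≤ c * (∏ i, g i (y i) + ∏ i, g' i (y i))) :
    mixedNorm k p (fun _ => Set.Icc (-R) R) h ≤
      2 ^ (k+1) * c * ∏ i, ((∫ t in Set.Icc (-R) R, g i t ^ p i) ^ (1 / p i)
                        + (∫ t in Set.Icc (-R) R, g' i t ^ p i) ^ (1 / p i)) := by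
  induction k generalizing c with
  | zero =>
      have := hbound (fun i => i.elim0) (fun i => i.elim0) (fun i => i.elim0)
      simp only [mixedNorm, Finset.univ_eq_empty, Finset.prod_empty] at this ⊢
      calc |h fun i => i.elim0| ≤ c * (1 + 1) := this
        _ = 2 ^ (0+1) * c * 1 := by ring
  | succ k ih =>
      set pl := p (Fin.last k) with hpl
      have hpl1 : 1 ≤ pl := hp _
      have hpl0 : 0 < pl := lt_of_lt_of_le one_pos hpl1
      set N : Fin (k+1) → ℝ :=
        fun i => (∫ t in Set.Icc (-R) R, g i t ^ p i) ^ (1 / p i) with hN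
      set N' : Fin (k+1) → ℝ :=
        fun i => (∫ t in Set.Icc (-R) R, g' i t ^ p i) ^ (1 / p i) with hN'
      have hNnn : ∀ i, 0 ≤ N i := fun i => Real.rpow_nonneg
        (setIntegral_nonneg measurableSet_Icc fun t _ => Real.rpow_nonneg (hg0 i t) _) _
      have hN'nn : ∀ i, 0 ≤ N' i := fun i => Real.rpow_nonneg
        (setIntegral_nonneg measurableSet_Icc fun t _ => Real.rpow_nonneg (hg'0 i t) _) _
      set P : ℝ := ∏ i : Fin k, (N i.castSucc + N' i.castSucc) with hP
      have hPnn : 0 ≤ P := Finset.prod_nonneg fun i _ => add_nonneg (hNnn _) (hN'nn _)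
      set A0 : ℝ := 2 ^ (k+1) * c * P with hA0
      have hA0nn : 0 ≤ A0 := by positivity
      -- inner bound
      have hinner : ∀ t : ℝ, t ≠ ex (Fin.last k) → t ≠ ex' (Fin.last k) →
          mixedNorm k (fun i => p i.castSucc) (fun i => Set.Icc (-R) R)
            (fun η => h (Fin.snoc η t)) ≤ A0 * (g (Fin.last k) t + g' (Fin.last k) t) := by
        intro t ht ht'
        have hmax : (0:ℝ) ≤ max (g (Fin.last k) t) (g' (Fin.last k) t) :=
          le_trans (hg0 _ t) (le_max_left _ _)
        have := ih (fun i => p i.castSucc) (fun i => hp _)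
          (fun i => g i.castSucc) (fun i => g' i.castSucc)
          (fun i => ex i.castSucc) (fun i => ex' i.castSucc)
          (fun i s => hg0 _ s) (fun i s => hg'0 _ s)
          (fun i => hgint _) (fun i => hg'int _)
          (c * max (g (Fin.last k) t) (g' (Fin.last k) t)) (by positivity)
          (fun η => h (Fin.snoc η t))
          (by
            intro η hη hη'
            have hy : ∀ i : Fin (k+1), (Fin.snoc η t : Fin (k+1) → ℝ) i ≠ ex i := by
              intro i
              induction i using Fin.lastCases with
              | last => simpa [Fin.snoc_last] using ht
              | cast j => simpa [Fin.snoc_castSucc] using hη j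
            have hy' : ∀ i : Fin (k+1), (Fin.snoc η t : Fin (k+1) → ℝ) i ≠ ex' i := by
              intro i
              induction i using Fin.lastCases with
              | last => simpa [Fin.snoc_last] using ht'
              | cast j => simpa [Fin.snoc_castSucc] using hη' j
            have hb := hbound (Fin.snoc η t : Fin (k+1) → ℝ) hy hy'
            rw [Fin.prod_univ_castSucc, Fin.prod_univ_castSucc] at hb
            simp only [Fin.snoc_castSucc, Fin.snoc_last] at hb
            refine le_trans hb ?_
            have h1 : (∏ i : Fin k, g i.castSucc (η i)) * g (Fin.last k) t
                ≤ (∏ i : Fin k, g i.castSucc (η i)) *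
                  max (g (Fin.last k) t) (g' (Fin.last k) t) :=
              mul_le_mul_of_nonneg_left (le_max_left _ _)
                (Finset.prod_nonneg fun i _ => hg0 _ _)
            have h2 : (∏ i : Fin k, g' i.castSucc (η i)) * g' (Fin.last k) t
                ≤ (∏ i : Fin k, g' i.castSucc (η i)) *
                  max (g (Fin.last k) t) (g' (Fin.last k) t) :=
              mul_le_mul_of_nonneg_left (le_max_right _ _)
                (Finset.prod_nonneg fun i _ => hg'0 _ _)
            nlinarith [hc, hmax])
        refine le_trans this ?_
        have hPe : (∏ i : Fin k,
            ((∫ s in Set.Icc (-R) R, g i.castSucc s ^ p i.castSucc) ^ (1 / p i.castSucc)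
            + (∫ s in Set.Icc (-R) R, g' i.castSucc s ^ p i.castSucc) ^ (1 / p i.castSucc)))
            = P := rfl
        rw [hPe]
        have : 2 ^ (k+1) * (c * max (g (Fin.last k) t) (g' (Fin.last k) t)) * P
            ≤ 2 ^ (k+1) * (c * (g (Fin.last k) t + g' (Fin.last k) t)) * P := by
          have : max (g (Fin.last k) t) (g' (Fin.last k) t)
              ≤ g (Fin.last k) t + g' (Fin.last k) t :=
            max_le (le_add_of_nonneg_right (hg'0 _ t)) (le_add_of_nonneg_left (hg0 _ t))
          nlinarith [hPnn, hc]
        refine le_trans this (le_of_eq ?_)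
        ring
      -- now the integral estimate
      set l := Fin.last k with hl
      have hdef : mixedNorm (k+1) p (fun _ => Set.Icc (-R) R) h =
          (∫ t in Set.Icc (-R) R,
            (mixedNorm k (fun i => p i.castSucc) (fun _ : Fin k => Set.Icc (-R) R)
              (fun η => h (Fin.snoc η t))) ^ pl) ^ (1/pl) := rfl
      set I : ℝ → ℝ := fun t => mixedNorm k (fun i => p i.castSucc)
          (fun _ : Fin k => Set.Icc (-R) R) (fun η => h (Fin.snoc η t)) with hI
      have hInn : ∀ t, 0 ≤ I t := fun t => mixedNorm_nonneg _ _ _ _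
      set Gmaj : ℝ → ℝ := fun t => A0 ^ pl * 2 ^ pl * (g l t ^ pl + g' l t ^ pl) with hGm
      have hGint : Integrable Gmaj (volume.restrict (Set.Icc (-R) R)) :=
        ((hgint l).add (hg'int l)).const_mul _
      have haebound : ∀ᵐ t ∂(volume.restrict (Set.Icc (-R) R)), I t ^ pl ≤ Gmaj t := by
        have hnull : volume ({ex l, ex' l} : Set ℝ) = 0 :=
          measure_union_null (measure_singleton _) (measure_singleton _)
        have h1 : ∀ᵐ t ∂(volume : Measure ℝ), t ∉ ({ex l, ex' l} : Set ℝ) := by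
          rw [ae_iff]
          have hset : {a : ℝ | ¬a ∉ ({ex l, ex' l} : Set ℝ)} = ({ex l, ex' l} : Set ℝ) := by
            ext t; simp [or_iff_not_imp_left]
          rw [hset]
          exact hnull
        filter_upwards [ae_restrict_of_ae h1] with t ht
        have ht1 : t ≠ ex l := fun hh => ht (by simp [hh])
        have ht2 : t ≠ ex' l := fun hh => ht (by simp [hh])
        have h2 := hinner t ht1 ht2
        have hgl : 0 ≤ g l t := hg0 _ _
        have hg'l : 0 ≤ g' l t := hg'0 _ _
        calc I t ^ pl ≤ (A0 * (g l t + g' l t)) ^ pl :=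
              Real.rpow_le_rpow (hInn t) h2 (le_of_lt hpl0)
          _ = A0 ^ pl * (g l t + g' l t) ^ pl := Real.mul_rpow hA0nn (by positivity)
          _ ≤ A0 ^ pl * (2 ^ pl * (g l t ^ pl + g' l t ^ pl)) := by
              refine mul_le_mul_of_nonneg_left ?_ (Real.rpow_nonneg hA0nn _)
              have hmx : g l t + g' l t ≤ 2 * max (g l t) (g' l t) := by
                rcases max_cases (g l t) (g' l t) with ⟨hm, hm2⟩ | ⟨hm, hm2⟩ <;>
                  rw [hm] <;> linarith
              calc (g l t + g' l t) ^ pl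
                  ≤ (2 * max (g l t) (g' l t)) ^ pl :=
                    Real.rpow_le_rpow (by positivity) hmx (le_of_lt hpl0)
                _ = 2 ^ pl * max (g l t) (g' l t) ^ pl :=
                    Real.mul_rpow (by norm_num) (le_trans hgl (le_max_left _ _))
                _ ≤ 2 ^ pl * (g l t ^ pl + g' l t ^ pl) := by
                    refine mul_le_mul_of_nonneg_left ?_
                      (Real.rpow_nonneg (by norm_num) _)
                    rcases max_cases (g l t) (g' l t) with ⟨hm, _⟩ | ⟨hm, _⟩ <;> rw [hm]
                    · exact le_add_of_nonneg_right (Real.rpow_nonneg hg'l _)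
                    · exact le_add_of_nonneg_left (Real.rpow_nonneg hgl _)
          _ = Gmaj t := by rw [hGm]; ring
      set M : ℝ := ∫ t in Set.Icc (-R) R, g l t ^ p l with hM
      set M' : ℝ := ∫ t in Set.Icc (-R) R, g' l t ^ p l with hM'
      have hMnn : 0 ≤ M := setIntegral_nonneg measurableSet_Icc
        fun t _ => Real.rpow_nonneg (hg0 _ t) _
      have hM'nn : 0 ≤ M' := setIntegral_nonneg measurableSet_Icc
        fun t _ => Real.rpow_nonneg (hg'0 _ t) _
      have hGval : ∫ t in Set.Icc (-R) R, Gmaj t = A0 ^ pl * 2 ^ pl * (M + M') := by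
        rw [hGm]
        rw [MeasureTheory.integral_const_mul]
        rw [integral_add (hgint l) (hg'int l)]
      have hint : ∫ t in Set.Icc (-R) R, I t ^ pl ≤ A0 ^ pl * 2 ^ pl * (M + M') := by
        rw [← hGval]
        exact integral_mono_of_nonneg
          (Filter.Eventually.of_forall fun t => Real.rpow_nonneg (hInn t) _)
          hGint haebound
      rw [hdef]
      have hfin : ((A0 ^ pl * 2 ^ pl * (M + M')) : ℝ) ^ (1/pl)
          ≤ A0 * 2 * (N l + N' l) := by
        have e1 : ((A0 ^ pl * 2 ^ pl * (M + M')) : ℝ) ^ (1/pl)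
            = A0 * 2 * ((M + M') ^ (1/pl)) := by
          rw [Real.mul_rpow (by positivity) (by positivity),
            Real.mul_rpow (Real.rpow_nonneg hA0nn _) (Real.rpow_nonneg (by norm_num) _),
            one_div, Real.rpow_rpow_inv hA0nn (ne_of_gt hpl0),
            Real.rpow_rpow_inv (by norm_num) (ne_of_gt hpl0)]
        rw [e1]
        have e2 : (M + M') ^ (1/pl) ≤ M ^ (1/pl) + M' ^ (1/pl) :=
          rpow_add_le_add_rpow_real hMnn hM'nn (by positivity)
            (by rw [div_le_one hpl0]; exact hpl1)
        have : N l + N' l = M ^ (1/pl) + M' ^ (1/pl) := rfl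
        rw [this]
        nlinarith [hA0nn]
      calc (∫ t in Set.Icc (-R) R, I t ^ pl) ^ (1/pl)
          ≤ ((A0 ^ pl * 2 ^ pl * (M + M')) : ℝ) ^ (1/pl) :=
            Real.rpow_le_rpow
              (integral_nonneg fun t => Real.rpow_nonneg (hInn t) _) hint (by positivity)
        _ ≤ A0 * 2 * (N l + N' l) := hfin
        _ = 2 ^ (k+1+1) * c * ∏ i : Fin (k+1), (N i + N' i) := by
            rw [Fin.prod_univ_castSucc, hA0]
            ring

lemma pow_succ_sub_le (n : ℕ) : ∀ {u v : ℝ}, 0 ≤ u → u ≤ v →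
    v ^ (n+1) - u ^ (n+1) ≤ (n+1) * v ^ n * (v - u) := by
  induction n with
  | zero => intro u v hu huv; simp
  | succ n ih =>
      intro u v hu huv
      have hv : 0 ≤ v := le_trans hu huv
      have h1 := ih hu huv
      have h2 : u ^ (n+1) ≤ v ^ (n+1) := pow_le_pow_left₀ hu huv _
      have e1 : v ^ (n+2) - u ^ (n+2)
          = v * (v ^ (n+1) - u ^ (n+1)) + u ^ (n+1) * (v - u) := by ring
      rw [e1]
      have h3 : v * (v ^ (n+1) - u ^ (n+1)) ≤ v * ((n+1) * v ^ n * (v - u)) :=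
        mul_le_mul_of_nonneg_left h1 hv
      have h4 : u ^ (n+1) * (v - u) ≤ v ^ (n+1) * (v - u) :=
        mul_le_mul_of_nonneg_right h2 (by linarith)
      have e2 : v * ((n+1) * v ^ n * (v - u)) = (n+1) * v ^ (n+1) * (v - u) := by ring
      push_cast
      nlinarith [h3, h4, e2]

set_option maxHeartbeats 1000000 in
lemma holder_pt_aux (n : ℕ) {lam u v d : ℝ} (hl0 : 0 < lam) (hl1 : lam ≤ 1)
    (hu : 0 ≤ u) (hv : 0 ≤ v) (huv : u ≤ v) (hd : |u - v| ≤ d) :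
    |u ^ (-(n:ℝ)) - v ^ (-(n:ℝ))|
      ≤ ((n:ℝ) + 2) * d ^ lam * (u ^ (-(n:ℝ) - lam) + v ^ (-(n:ℝ) - lam)) := by
  have hd0 : 0 ≤ d := le_trans (abs_nonneg _) hd
  rcases Nat.eq_zero_or_pos n with hn | hn
  · subst hn
    simp only [Nat.cast_zero, neg_zero, Real.rpow_zero, sub_self, abs_zero]
    positivity
  obtain ⟨m, rfl⟩ : ∃ m, n = m + 1 := ⟨n - 1, by omega⟩
  set nr : ℝ := ((m+1 : ℕ) : ℝ) with hnr
  have hnr1 : 1 ≤ nr := by rw [hnr]; exact Nat.one_le_cast.mpr (by omega)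
  have hnrpos : (0:ℝ) < nr := by linarith
  rcases eq_or_lt_of_le hu with hu0 | hu0
  · -- u = 0
    rw [← hu0]
    rw [Real.zero_rpow (ne_of_lt (by linarith) : -(nr) ≠ 0),
        Real.zero_rpow (ne_of_lt (by linarith) : -(nr) - lam ≠ 0)]
    rcases eq_or_lt_of_le hv with hv0 | hv0
    · rw [← hv0, Real.zero_rpow (ne_of_lt (by linarith) : -(nr) ≠ 0)]
      simp
      positivity
    · have hdv : v ≤ d := by rw [← hu0] at hd; rwa [abs_sub_comm, sub_zero, abs_of_nonneg hv] at hd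
      rw [zero_sub, abs_neg, abs_of_nonneg (Real.rpow_nonneg hv _)]
      have e1 : v ^ (-nr) = v ^ lam * v ^ (-nr - lam) := by
        rw [← Real.rpow_add hv0]; congr 1; ring
      rw [e1]
      have : v ^ lam ≤ d ^ lam := Real.rpow_le_rpow hv hdv (le_of_lt hl0)
      have hvnl : 0 ≤ v ^ (-nr - lam) := Real.rpow_nonneg hv _
      have hdl : 0 ≤ d ^ lam := Real.rpow_nonneg hd0 _
      nlinarith [mul_nonneg hdl hvnl, mul_le_mul_of_nonneg_right this hvnl, hnr1]
  · -- 0 < u ≤ v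
    have hv0 : 0 < v := lt_of_lt_of_le hu0 huv
    have hmono : v ^ (-nr) ≤ u ^ (-nr) :=
      Real.rpow_le_rpow_of_nonpos hu0 huv (by linarith)
    rw [abs_of_nonneg (by linarith)]
    have hunl : 0 ≤ u ^ (-nr - lam) := Real.rpow_nonneg hu _
    have hvnl : 0 ≤ v ^ (-nr - lam) := Real.rpow_nonneg hv _
    have hdl : 0 ≤ d ^ lam := Real.rpow_nonneg hd0 _
    rcases le_or_gt u (2*d) with hcase | hcase
    · -- u ≤ 2d
      have e1 : u ^ (-nr) = u ^ lam * u ^ (-nr - lam) := by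
        rw [← Real.rpow_add hu0]; congr 1; ring
      have h2 : u ^ lam ≤ (2*d) ^ lam := Real.rpow_le_rpow hu hcase (le_of_lt hl0)
      have h3 : (2*d) ^ lam = 2 ^ lam * d ^ lam := Real.mul_rpow (by norm_num) hd0
      have h4 : (2:ℝ) ^ lam ≤ 2 := by
        calc (2:ℝ) ^ lam ≤ 2 ^ (1:ℝ) :=
          Real.rpow_le_rpow_of_exponent_le (by norm_num) hl1
        _ = 2 := Real.rpow_one 2
      have h5 : u ^ (-nr) ≤ 2 * d ^ lam * u ^ (-nr - lam) := by
        rw [e1]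
        calc u ^ lam * u ^ (-nr - lam) ≤ 2 ^ lam * d ^ lam * u ^ (-nr - lam) := by
              rw [← h3]; exact mul_le_mul_of_nonneg_right h2 hunl
          _ ≤ 2 * d ^ lam * u ^ (-nr - lam) := by nlinarith [mul_nonneg hdl hunl, h4]
      have hvn : 0 ≤ v ^ (-nr) := Real.rpow_nonneg hv _
      nlinarith [mul_nonneg hdl hunl, mul_nonneg hdl hvnl, h5, hnr1]
    · -- 2d < u
      have hdu : d < u := by linarith
      have hvu : v - u ≤ d := by
        have := abs_sub_abs_le_abs_sub v u
        rw [abs_sub_comm] at hd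
        calc v - u ≤ |v - u| := le_abs_self _
          _ ≤ d := hd
      -- convert to nat powers
      have hup : (0:ℝ) < u ^ (m+1) := pow_pos hu0 _
      have hvp : (0:ℝ) < v ^ (m+1) := pow_pos hv0 _
      have e1 : u ^ (-nr) - v ^ (-nr) = (v ^ (m+1) - u ^ (m+1)) / (u ^ (m+1) * v ^ (m+1)) := by
        rw [hnr, Real.rpow_neg (le_of_lt hu0), Real.rpow_neg (le_of_lt hv0),
          Real.rpow_natCast, Real.rpow_natCast]
        field_simp
      have h2 : v ^ (m+1) - u ^ (m+1) ≤ (m+1) * v ^ m * d := by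
        calc v ^ (m+1) - u ^ (m+1) ≤ (m+1) * v ^ m * (v - u) :=
              pow_succ_sub_le m (le_of_lt hu0) huv
          _ ≤ (m+1) * v ^ m * d := by
              have : (0:ℝ) ≤ (m+1) * v ^ m := by positivity
              nlinarith
      have h3 : u ^ (-nr) - v ^ (-nr) ≤ ((m+1) * v ^ m * d) / (u ^ (m+1) * v ^ (m+1)) := by
        rw [e1]
        exact (div_le_div_iff_of_pos_right (by positivity)).mpr h2
      have e2 : ((m+1 : ℝ) * v ^ m * d) / (u ^ (m+1) * v ^ (m+1))
          = (m+1 : ℝ) * d / (u ^ (m+1) * v) := by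
        rw [pow_succ v m]; field_simp
      have h4 : (m+1 : ℝ) * d / (u ^ (m+1) * v) ≤ (m+1 : ℝ) * d / (u ^ (m+1) * u) := by
        apply div_le_div_of_nonneg_left (by positivity) (by positivity)
        exact mul_le_mul_of_nonneg_left huv (le_of_lt hup)
      have e3 : (m+1 : ℝ) * d / (u ^ (m+1) * u) = (m+1 : ℝ) * d * u ^ (-nr - 1) := by
        rw [hnr]
        rw [show -((m+1 : ℕ) : ℝ) - 1 = -(((m+2 : ℕ) : ℝ)) by push_cast; ring]
        rw [Real.rpow_neg (le_of_lt hu0), Real.rpow_natCast]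
        rw [pow_succ u (m+1)]
        field_simp
      have h5 : d ≤ d ^ lam * u ^ (1 - lam) := by
        rcases eq_or_lt_of_le hd0 with hdz | hdz
        · rw [← hdz]
          rw [Real.zero_rpow (ne_of_gt hl0)]
          simp
        · have hfac : d = d ^ lam * d ^ (1 - lam) := by
            rw [← Real.rpow_add hdz, show lam + (1 - lam) = 1 by ring, Real.rpow_one]
          nth_rewrite 1 [hfac]
          exact mul_le_mul_of_nonneg_left
            (Real.rpow_le_rpow hd0 (le_of_lt hdu) (by linarith : (0:ℝ) ≤ 1 - lam)) hdl
      have e4 : u ^ (1 - lam) * u ^ (-nr - 1) = u ^ (-nr - lam) := by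
        rw [← Real.rpow_add hu0]; congr 1; ring
      have h6 : u ^ (-nr) - v ^ (-nr) ≤ (m+1 : ℝ) * d ^ lam * u ^ (-nr - lam) := by
        have hun1 : (0:ℝ) ≤ u ^ (-nr - 1) := Real.rpow_nonneg (le_of_lt hu0) _
        calc u ^ (-nr) - v ^ (-nr) ≤ (m+1 : ℝ) * d * u ^ (-nr - 1) := by
              rw [← e3]; exact le_trans h3 (le_of_eq e2 |>.trans h4)
          _ ≤ (m+1 : ℝ) * (d ^ lam * u ^ (1 - lam)) * u ^ (-nr - 1) := by
              have hmul := mul_le_mul_of_nonneg_right h5 hun1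
              have hmn : (0:ℝ) ≤ (m+1 : ℝ) := by positivity
              calc (m+1 : ℝ) * d * u ^ (-nr - 1)
                  = (m+1 : ℝ) * (d * u ^ (-nr - 1)) := by ring
                _ ≤ (m+1 : ℝ) * (d ^ lam * u ^ (1 - lam) * u ^ (-nr - 1)) :=
                    mul_le_mul_of_nonneg_left hmul hmn
                _ = (m+1 : ℝ) * (d ^ lam * u ^ (1 - lam)) * u ^ (-nr - 1) := by ring
          _ = (m+1 : ℝ) * d ^ lam * (u ^ (1 - lam) * u ^ (-nr - 1)) := by ring
          _ = (m+1 : ℝ) * d ^ lam * u ^ (-nr - lam) := by rw [e4]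
      have hcast : nr = (m:ℝ) + 1 := by rw [hnr]; push_cast; ring
      have h7 : (m+1 : ℝ) * d ^ lam * u ^ (-nr - lam)
          ≤ (nr + 2) * d ^ lam * (u ^ (-nr - lam) + v ^ (-nr - lam)) := by
        have h8 : (m+1:ℝ) ≤ nr + 2 := by rw [hcast]; linarith
        have h9 : d ^ lam * u ^ (-nr - lam)
            ≤ d ^ lam * (u ^ (-nr - lam) + v ^ (-nr - lam)) := by
          nlinarith [mul_nonneg hdl hvnl]
        calc (m+1:ℝ) * d ^ lam * u ^ (-nr - lam)
            = (m+1:ℝ) * (d ^ lam * u ^ (-nr - lam)) := by ring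
          _ ≤ (nr+2) * (d ^ lam * (u ^ (-nr - lam) + v ^ (-nr - lam))) :=
              mul_le_mul h8 h9 (mul_nonneg hdl hunl) (by linarith)
          _ = (nr+2) * d ^ lam * (u ^ (-nr - lam) + v ^ (-nr - lam)) := by ring
      linarith [h6, h7]

lemma holder_pt (n : ℕ) {lam u v d : ℝ} (hl0 : 0 < lam) (hl1 : lam ≤ 1)
    (hu : 0 ≤ u) (hv : 0 ≤ v) (hd : |u - v| ≤ d) :
    |u ^ (-(n:ℝ)) - v ^ (-(n:ℝ))|
      ≤ ((n:ℝ) + 2) * d ^ lam * (u ^ (-(n:ℝ) - lam) + v ^ (-(n:ℝ) - lam)) := by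
  rcases le_total u v with huv | hvu
  · exact holder_pt_aux n hl0 hl1 hu hv huv hd
  · rw [abs_sub_comm]
    rw [abs_sub_comm] at hd
    have := holder_pt_aux n hl0 hl1 hv hu hvu hd
    calc |v ^ (-(n:ℝ)) - u ^ (-(n:ℝ))|
        ≤ ((n:ℝ) + 2) * d ^ lam * (v ^ (-(n:ℝ) - lam) + u ^ (-(n:ℝ) - lam)) := this
      _ = ((n:ℝ) + 2) * d ^ lam * (u ^ (-(n:ℝ) - lam) + v ^ (-(n:ℝ) - lam)) := by ring

lemma eucNorm_nonneg {k : ℕ} (x : Fin k → ℝ) : 0 ≤ eucNorm x := Real.sqrt_nonneg _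

lemma eucNorm_eq_norm {k : ℕ} (x : Fin k → ℝ) :
    eucNorm x = ‖(WithLp.equiv 2 (Fin k → ℝ)).symm x‖ := by
  rw [EuclideanSpace.norm_eq, eucNorm]
  congr 1
  refine Finset.sum_congr rfl fun i _ => ?_
  rw [Real.norm_eq_abs, sq_abs]
  rfl

lemma abs_le_eucNorm {k : ℕ} (x : Fin k → ℝ) (i : Fin k) : |x i| ≤ eucNorm x := by
  rw [eucNorm, ← Real.sqrt_sq_eq_abs]
  exact Real.sqrt_le_sqrt (Finset.single_le_sum (fun j _ => sq_nonneg (x j))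
    (Finset.mem_univ i))

lemma eucNorm_triangle {k : ℕ} (x y z : Fin k → ℝ) :
    |eucNorm (x - y) - eucNorm (z - y)| ≤ eucNorm (x - z) := by
  rw [eucNorm_eq_norm, eucNorm_eq_norm, eucNorm_eq_norm]
  have e1 : (WithLp.equiv 2 (Fin k → ℝ)).symm (x - y)
      - (WithLp.equiv 2 (Fin k → ℝ)).symm (z - y)
      = (WithLp.equiv 2 (Fin k → ℝ)).symm (x - z) := by
    simp only [WithLp.equiv_symm_apply, WithLp.toLp_sub]
    abel
  calc |‖(WithLp.equiv 2 (Fin k → ℝ)).symm (x - y)‖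
        - ‖(WithLp.equiv 2 (Fin k → ℝ)).symm (z - y)‖|
      ≤ ‖(WithLp.equiv 2 (Fin k → ℝ)).symm (x - y)
        - (WithLp.equiv 2 (Fin k → ℝ)).symm (z - y)‖ := abs_norm_sub_norm_le _ _
    _ = _ := by rw [e1]


/-- for `k ≥ 2`, `Hᵢ ∈ [1/2,1)` with `∑ Hᵢ > k-2`, `D ⊆ [-R,R]^k`, and
`λ ∈ (0, (2-k+∑Hᵢ) ∧ 1)`, there is `C` such that for all `x, z ∈ D`:
`‖|x-·|^{2-k-λ}‖_{L^{1/H₁,…,1/H_k}(D)} ≤ C` and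
`‖G(x,·)-G(z,·)‖_{L^{1/H₁,…,1/H_k}(D)} ≤ C|x-z|^λ`, where `G(x,y) = |x-y|^{2-k}`. -/
theorem stmt9 (k : ℕ) (hk : 2 ≤ k) (H : Fin k → ℝ)
    (hH : ∀ i, H i ∈ Set.Ico (1/2 : ℝ) 1) (hsum : (k : ℝ) - 2 < ∑ i, H i)
    (R : ℝ) (hR : 0 < R) (D : Set (Fin k → ℝ))
    (hD : D ⊆ Set.pi Set.univ fun _ => Set.Icc (-R) R)
    (lam : ℝ) (hlam : lam ∈ Set.Ioo 0 (min (2 - (k:ℝ) + ∑ i, H i) 1)) :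
    ∃ C : ℝ, ∀ x ∈ D, ∀ z ∈ D,
      mixedNorm k (fun i => 1 / H i) (fun _ => Set.Icc (-R) R)
          (Set.indicator D fun y => eucNorm (x - y) ^ ((2:ℝ) - k - lam)) ≤ C ∧
      mixedNorm k (fun i => 1 / H i) (fun _ => Set.Icc (-R) R)
          (Set.indicator D fun y =>
            eucNorm (x - y) ^ ((2:ℝ) - k) - eucNorm (z - y) ^ ((2:ℝ) - k)) ≤
        C * eucNorm (x - z) ^ lam := by
  obtain ⟨hl0, hlmin⟩ := hlam
  have hl1 : lam ≤ 1 := le_of_lt (lt_of_lt_of_le hlmin (min_le_right _ _))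
  have hlsum : lam < 2 - (k:ℝ) + ∑ i, H i := lt_of_lt_of_le hlmin (min_le_left _ _)
  have hk2 : (2:ℝ) ≤ (k:ℝ) := by exact_mod_cast hk
  have hkpos : 0 < k := by omega
  have hHpos : ∀ i, 0 < H i := fun i => lt_of_lt_of_le (by norm_num) (hH i).1
  have hs : 0 < ∑ i, H i :=
    Finset.sum_pos (fun i _ => hHpos i) ⟨⟨0, hkpos⟩, Finset.mem_univ _⟩
  set s : ℝ := ∑ i, H i with hsdef
  set γ : ℝ := (k:ℝ) - 2 + lam with hγ
  have hγ0 : 0 < γ := by rw [hγ]; linarith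
  have hγs : γ < s := by rw [hγ]; linarith
  set e : ℝ := γ / s with he
  have he0 : 0 < e := div_pos hγ0 hs
  have he1 : e < 1 := (div_lt_one hs).2 hγs
  set n : ℕ := k - 2 with hn
  have hncast : ((n:ℕ):ℝ) = (k:ℝ) - 2 := by
    rw [hn, Nat.cast_sub hk]; norm_num
  set p : Fin k → ℝ := fun i => 1 / H i with hp
  have hp1 : ∀ i, 1 ≤ p i := by
    intro i
    rw [hp]
    simp only
    rw [le_div_iff₀ (hHpos i)]
    linarith [(hH i).2]
  set γc : Fin k → ℝ := fun i => (H i / s) * γ with hγc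
  have hγcpos : ∀ i, 0 < γc i := fun i => by
    rw [hγc]; exact mul_pos (div_pos (hHpos i) hs) hγ0
  have hγce : ∀ i, (-γc i) * p i = -e := by
    intro i
    have h1 : H i ≠ 0 := ne_of_gt (hHpos i)
    have h2 : s ≠ 0 := ne_of_gt hs
    simp only [hγc, hp, he]
    field_simp
  have hγcsum : ∑ i, -γc i = -γ := by
    simp only [hγc]
    rw [Finset.sum_neg_distrib, ← Finset.sum_mul, ← Finset.sum_div, ← hsdef,
      div_self (ne_of_gt hs), one_mul]
  set B : ℝ := 2 * (2*R) ^ (1-e) / (1-e) with hB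
  set CP : ℝ := ∏ i : Fin k, (B ^ (H i) + B ^ (H i)) with hCP
  have hBnn : (0:ℝ) ≤ B := by
    rw [hB]
    have h1e : 0 < 1 - e := by linarith
    positivity
  have hCPnn : 0 ≤ CP := Finset.prod_nonneg fun i _ =>
    add_nonneg (Real.rpow_nonneg hBnn _) (Real.rpow_nonneg hBnn _)
  set C : ℝ := max (2 ^ (k+1) * (1/2) * CP) (2 ^ (k+1) * ((n:ℝ)+2) * CP) with hC
  refine ⟨C, ?_⟩
  intro x hx z hz
  -- key one dimensional facts
  have hkey : ∀ w : Fin k → ℝ, w ∈ D → ∀ i : Fin k,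
      IntegrableOn (fun t => (|w i - t| ^ (-γc i)) ^ p i) (Set.Icc (-R) R) ∧
      (∫ t in Set.Icc (-R) R, (|w i - t| ^ (-γc i)) ^ p i) ^ (1 / p i) ≤ B ^ (H i) := by
    intro w hw i
    have hwR : |w i| ≤ R := by
      have h1 := hD hw
      rw [Set.mem_univ_pi] at h1
      exact abs_le.2 ⟨(h1 i).1, (h1 i).2⟩
    have hfun : (fun t : ℝ => (|w i - t| ^ (-γc i)) ^ p i)
        = fun t : ℝ => |w i - t| ^ (-e) := by
      funext t
      rw [← Real.rpow_mul (abs_nonneg _), hγce i]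
    obtain ⟨hint, hval⟩ := aux_oneDim hR (le_of_lt he0) he1 hwR
    constructor
    · rw [hfun]; exact hint
    · rw [hfun]
      have h1 : 0 ≤ ∫ t in Set.Icc (-R) R, |w i - t| ^ (-e) :=
        setIntegral_nonneg measurableSet_Icc fun t _ => Real.rpow_nonneg (abs_nonneg _) _
      have h2 : (∫ t in Set.Icc (-R) R, |w i - t| ^ (-e)) ^ (1 / p i) ≤ B ^ (1 / p i) :=
        Real.rpow_le_rpow h1 hval (one_div_nonneg.2 (le_trans zero_le_one (hp1 i)))
      have h3 : (1 : ℝ) / p i = H i := by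
        rw [hp]; exact one_div_one_div (H i)
      rw [h3] at h2 ⊢
      exact h2
  -- pointwise product bound
  have hprod : ∀ w y : Fin k → ℝ, (∀ i, y i ≠ w i) →
      eucNorm (w - y) ^ (-γ) ≤ ∏ i, |w i - y i| ^ (-γc i) := by
    intro w y hy
    have habs : ∀ i, |w i - y i| ≤ eucNorm (w - y) := by
      intro i
      simpa [Pi.sub_apply] using abs_le_eucNorm (w - y) i
    have habs0 : ∀ i, 0 < |w i - y i| := fun i =>
      abs_pos.2 (sub_ne_zero.2 (Ne.symm (hy i)))
    have hupos : 0 < eucNorm (w - y) :=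
      lt_of_lt_of_le (habs0 ⟨0, hkpos⟩) (habs ⟨0, hkpos⟩)
    have e1 : eucNorm (w - y) ^ (-γ) = ∏ i, eucNorm (w - y) ^ (-γc i) := by
      rw [← hγcsum, Real.rpow_sum_of_pos hupos]
    rw [e1]
    refine Finset.prod_le_prod (fun i _ => Real.rpow_nonneg (eucNorm_nonneg _) _)
      (fun i _ => ?_)
    exact Real.rpow_le_rpow_of_nonpos (habs0 i) (habs i)
      (by linarith [hγcpos i])
  constructor
  · -- first statement
    have happ := mixedNorm_le k p hp1 R
      (fun i t => |x i - t| ^ (-γc i)) (fun i t => |x i - t| ^ (-γc i)) x x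
      (fun i t => Real.rpow_nonneg (abs_nonneg _) _)
      (fun i t => Real.rpow_nonneg (abs_nonneg _) _)
      (fun i => (hkey x hx i).1) (fun i => (hkey x hx i).1)
      (1/2) (by norm_num)
      (Set.indicator D fun y => eucNorm (x - y) ^ ((2:ℝ) - k - lam))
      (by
        intro y hy hy'
        by_cases hyD : y ∈ D
        · rw [Set.indicator_of_mem hyD]
          have hxp : (2:ℝ) - (k:ℝ) - lam = -γ := by rw [hγ]; ring
          rw [hxp, abs_of_nonneg (Real.rpow_nonneg (eucNorm_nonneg _) _)]
          have h1 := hprod x y hy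
          calc eucNorm (x - y) ^ (-γ) ≤ ∏ i, |x i - y i| ^ (-γc i) := h1
            _ = 1/2 * (∏ i, |x i - y i| ^ (-γc i) + ∏ i, |x i - y i| ^ (-γc i)) := by
                ring
        · rw [Set.indicator_of_notMem hyD, abs_zero]
          have h1 : 0 ≤ ∏ i, |x i - y i| ^ (-γc i) :=
            Finset.prod_nonneg fun i _ => Real.rpow_nonneg (abs_nonneg _) _
          linarith)
    refine le_trans happ (le_trans ?_ (le_max_left _ _))
    have hple : ∏ i, ((∫ t in Set.Icc (-R) R, (|x i - t| ^ (-γc i)) ^ p i) ^ (1 / p i)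
          + (∫ t in Set.Icc (-R) R, (|x i - t| ^ (-γc i)) ^ p i) ^ (1 / p i)) ≤ CP := by
      rw [hCP]
      refine Finset.prod_le_prod (fun i _ => add_nonneg ?_ ?_) (fun i _ =>
        add_le_add (hkey x hx i).2 (hkey x hx i).2) <;>
        exact Real.rpow_nonneg (setIntegral_nonneg measurableSet_Icc
          fun t _ => Real.rpow_nonneg (Real.rpow_nonneg (abs_nonneg _) _) _) _
    have h2 : (0:ℝ) ≤ 2 ^ (k+1) * (1/2) := by positivity
    calc 2 ^ (k+1) * (1/2) * ∏ i, ((∫ t in Set.Icc (-R) R,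
            (|x i - t| ^ (-γc i)) ^ p i) ^ (1 / p i)
          + (∫ t in Set.Icc (-R) R, (|x i - t| ^ (-γc i)) ^ p i) ^ (1 / p i))
        = (2 ^ (k+1) * (1/2)) * ∏ i, ((∫ t in Set.Icc (-R) R,
            (|x i - t| ^ (-γc i)) ^ p i) ^ (1 / p i)
          + (∫ t in Set.Icc (-R) R, (|x i - t| ^ (-γc i)) ^ p i) ^ (1 / p i)) := by ring
      _ ≤ (2 ^ (k+1) * (1/2)) * CP := mul_le_mul_of_nonneg_left hple h2
      _ = 2 ^ (k+1) * (1/2) * CP := by ring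
  · -- second statement
    set d : ℝ := eucNorm (x - z) with hd
    have hd0 : 0 ≤ d := eucNorm_nonneg _
    have hdl : 0 ≤ d ^ lam := Real.rpow_nonneg hd0 _
    have happ := mixedNorm_le k p hp1 R
      (fun i t => |x i - t| ^ (-γc i)) (fun i t => |z i - t| ^ (-γc i)) x z
      (fun i t => Real.rpow_nonneg (abs_nonneg _) _)
      (fun i t => Real.rpow_nonneg (abs_nonneg _) _)
      (fun i => (hkey x hx i).1) (fun i => (hkey z hz i).1)
      (((n:ℝ)+2) * d ^ lam) (by positivity)
      (Set.indicator D fun y =>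
        eucNorm (x - y) ^ ((2:ℝ) - k) - eucNorm (z - y) ^ ((2:ℝ) - k))
      (by
        intro y hy hy'
        by_cases hyD : y ∈ D
        · rw [Set.indicator_of_mem hyD]
          have hkn : ((2:ℝ) - (k:ℝ)) = -(n:ℝ) := by rw [hncast]; ring
          have hknl : -(n:ℝ) - lam = -γ := by rw [hncast, hγ]; ring
          rw [hkn]
          have htri : |eucNorm (x - y) - eucNorm (z - y)| ≤ d := eucNorm_triangle x y z
          have hh := holder_pt n hl0 hl1 (eucNorm_nonneg (x - y)) (eucNorm_nonneg (z - y)) htri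
          rw [hknl] at hh
          have h1 := hprod x y hy
          have h2 := hprod z y hy'
          calc |eucNorm (x - y) ^ (-(n:ℝ)) - eucNorm (z - y) ^ (-(n:ℝ))|
              ≤ ((n:ℝ) + 2) * d ^ lam *
                (eucNorm (x - y) ^ (-γ) + eucNorm (z - y) ^ (-γ)) := hh
            _ ≤ ((n:ℝ) + 2) * d ^ lam *
                (∏ i, |x i - y i| ^ (-γc i) + ∏ i, |z i - y i| ^ (-γc i)) := by
                refine mul_le_mul_of_nonneg_left (add_le_add h1 h2) (by positivity)
        · rw [Set.indicator_of_notMem hyD, abs_zero]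
          have h1 : 0 ≤ ∏ i, |x i - y i| ^ (-γc i) :=
            Finset.prod_nonneg fun i _ => Real.rpow_nonneg (abs_nonneg _) _
          have h2 : 0 ≤ ∏ i, |z i - y i| ^ (-γc i) :=
            Finset.prod_nonneg fun i _ => Real.rpow_nonneg (abs_nonneg _) _
          positivity)
    refine le_trans happ ?_
    have hple : ∏ i, ((∫ t in Set.Icc (-R) R, (|x i - t| ^ (-γc i)) ^ p i) ^ (1 / p i)
          + (∫ t in Set.Icc (-R) R, (|z i - t| ^ (-γc i)) ^ p i) ^ (1 / p i)) ≤ CP := by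
      rw [hCP]
      refine Finset.prod_le_prod (fun i _ => add_nonneg ?_ ?_) (fun i _ =>
        add_le_add (hkey x hx i).2 (hkey z hz i).2) <;>
        exact Real.rpow_nonneg (setIntegral_nonneg measurableSet_Icc
          fun t _ => Real.rpow_nonneg (Real.rpow_nonneg (abs_nonneg _) _) _) _
    have hCd : 2 ^ (k+1) * ((n:ℝ)+2) * CP ≤ C := le_max_right _ _
    calc 2 ^ (k+1) * (((n:ℝ)+2) * d ^ lam) * ∏ i, ((∫ t in Set.Icc (-R) R,
            (|x i - t| ^ (-γc i)) ^ p i) ^ (1 / p i)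
          + (∫ t in Set.Icc (-R) R, (|z i - t| ^ (-γc i)) ^ p i) ^ (1 / p i))
        ≤ 2 ^ (k+1) * (((n:ℝ)+2) * d ^ lam) * CP := by
          refine mul_le_mul_of_nonneg_left hple (by positivity)
      _ = (2 ^ (k+1) * ((n:ℝ)+2) * CP) * d ^ lam := by ring
      _ ≤ C * d ^ lam := mul_le_mul_of_nonneg_right hCd hdl
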